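/- Consider the one-clock priced timed automaton module Mod (for testing/decrementing counter c₁) with locations, cost rates and transitions as follows: A₀(1), B₀(3), C₀(1), A(1), B(3), C(1), C'(1), D(1), E₁(3), E₂(3), F₁(1), F₂(1), G₁(3), G₂(3), H₁(1), H₂(1), A₂(1), B₂(2), C₂(1), D₂(1); transitions (all of discrete cost 0 except C₂→D₂ of discrete cost 1): A₀→B₀ (x<1), B₀→C₀ (x=1, x:=0), C₀→C, C→D, D→A (x<1), A→B, B→C (x=1, x:=0), C→C', C'→C, D→E₁ (x=1, x:=0), D→E₂ (x>1, x:=0), E₁→F₁, E₂→F₂, F₁→G₁ (x:=0), F₂→G₂ (x:=0), G₁→H₁, G₂→H₂, H₂→A₂, A₂→B₂, B₂→C₂ (x=1, x:=0), C₂→D₂, plus an exit from A₀ (x=1) and from H₁ to module Mod_j, and an exit from D₂ to module Mod_k. Suppose there is a run ρ entering Mod at A₀ with clock value x = x₀ ≤ 1 and exiting towards Mod_k with clock value x = x₁, such that: (i) no time elapses in A₀, C₀, D, A, C', F₂, H₂, A₂ and D₂; (ii) every visit to C₀ or C' is eventually strictly followed by a visit to C' or F₂; (iii) the accumulated cost of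 ρ equals exactly 3 along each portion between A or A₀ and the next visit to D, along each portion between C₀ or C' and the next visit to C' or F₂, along the portion between the last visit to D and H₂, and along the portion between H₂ and D₂. Then x₁ = 2·x₀ and for every n ∈ ℕ, x₀ ≠ 3^(−n). -/

import Mathlib

/-! ## One-clock priced timed automata: common definitions -/

/-- Comparison operators used in clock constraints and cost constraints. -/
inductive Cmp
  | lt | le | eq | ge | gt
  deriving DecidableEq

/-- Satisfaction of `x ∼ c`. -/
def Cmp.sat : Cmp → ℝ → ℝ → Prop
  | .lt, x, c => x < c
  | .le, x, c => x ≤ c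
  | .eq, x, c => x = c
  | .ge, x, c => c ≤ x
  | .gt, x, c => c < x

/-- A guard (clock constraint) is a finite conjunction of constraints `x ∼ c`, `c ∈ ℕ`. -/
abbrev PGuard := List (Cmp × ℕ)

/-- A clock value satisfies a guard if it satisfies all its atomic constraints. -/
def PGuard.sat (g : PGuard) (x : ℝ) : Prop := ∀ p ∈ g, Cmp.sat p.1 x (p.2 : ℝ)

/-- A transition of a one-clock priced timed automaton: source, guard, reset set
(`reset = true` iff the clock is reset), target, and discrete cost. -/
structure PTrans (Q : Type) where
  src : Q
  guard : PGuard
  reset : Bool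
  tgt : Q
  dcost : ℕ

/-- A one-clock priced timed automaton with a single cost function:
a finite set `Q` of locations, an initial location, a finite set of transitions,
invariants, and a cost rate for each location (discrete costs are on transitions). -/
structure PTA (Q : Type) [Fintype Q] where
  init : Q
  E : Set (PTrans Q)
  finE : E.Finite
  Inv : Q → PGuard
  rate : Q → ℕ

variable {Q : Type} [Fintype Q]

/-- A delay move `(q,v) → (q,v+t)` of cost `t · rate q`, allowed if the invariant
holds throughout. -/
def DelayMove (A : PTA Q) (s : Q × ℝ) (c : ℝ) (s' : Q × ℝ) : Prop :=
  ∃ t : ℝ, 0 ≤ t ∧ s' = (s.1, s.2 + t) ∧ c = t * (A.rate s.1 : ℝ) ∧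
    ∀ t' : ℝ, 0 ≤ t' → t' ≤ t → PGuard.sat (A.Inv s.1) (s.2 + t')

/-- A discrete move via a transition of `A`, of cost the discrete cost of the transition. -/
def DiscMove (A : PTA Q) (s : Q × ℝ) (c : ℝ) (s' : Q × ℝ) : Prop :=
  ∃ e ∈ A.E, e.src = s.1 ∧ e.tgt = s'.1 ∧ PGuard.sat e.guard s.2 ∧
    s'.2 = (if e.reset then 0 else s.2) ∧ PGuard.sat (A.Inv e.tgt) s'.2 ∧ c = (e.dcost : ℝ)

/-- A simple move of the timed transition system `TTS_A`. -/
def PMove (A : PTA Q) (s : Q × ℝ) (c : ℝ) (s' : Q × ℝ) : Prop :=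
  DelayMove A s c s' ∨ DiscMove A s c s'

/-- `PPath A s c s'`: there is a path (finite sequence of simple moves) in `TTS_A`
from `s` to `s'` of total cost `c`. -/
inductive PPath (A : PTA Q) : (Q × ℝ) → ℝ → (Q × ℝ) → Prop
  | refl (s : Q × ℝ) : PPath A s 0 s
  | step {s s' s'' : Q × ℝ} {c c' : ℝ} :
      PMove A s c s' → PPath A s' c' s'' → PPath A s (c + c') s''

/-- Reachability in `TTS_A` (notation `⇝*` in the paper). -/
def PReach (A : PTA Q) (s s' : Q × ℝ) : Prop := ∃ c : ℝ, PPath A s c s'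

/-- A mixed move: a delay move followed by a discrete move. -/
def MixedMove (A : PTA Q) (s : Q × ℝ) (c : ℝ) (s' : Q × ℝ) : Prop :=
  ∃ (c₁ c₂ : ℝ) (m : Q × ℝ), DelayMove A s c₁ m ∧ DiscMove A m c₂ s' ∧ c = c₁ + c₂

/-- A priced timed automaton is non-blocking. -/
def NonBlocking (A : PTA Q) : Prop :=
  ∀ (q : Q) (v : ℝ), 0 ≤ v → ∃ (c : ℝ) (s' : Q × ℝ), MixedMove A (q, v) c s'

/-- The constants appearing in the clock constraints (guards and invariants) of `A`. -/
def PTA.consts (A : PTA Q) : Set ℕ :=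
  {c | (∃ e ∈ A.E, ∃ p ∈ e.guard, p.2 = c) ∨ ∃ q : Q, ∃ p ∈ A.Inv q, p.2 = c}

/-- The lcm of all positive cost rates labeling a location of `A`. -/
def posLcm (A : PTA Q) : ℕ :=
  Finset.lcm (Finset.univ.filter fun q => 0 < A.rate q) A.rate

/-! ## Finite runs (sequences of mixed moves) -/

/-- A finite run of `A` with `k` mixed moves: `st i` is the `i`-th state, the `i`-th mixed
move delays for `d i` time units (with the invariant satisfied throughout) and then takes
a discrete move of cost `cc i` to `st (i+1)`. -/
structure FinRun (A : PTA Q) (k : ℕ) where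
  st : ℕ → Q × ℝ
  d : ℕ → ℝ
  cc : ℕ → ℝ
  hdel : ∀ i < k, 0 ≤ d i ∧
    ∀ t' : ℝ, 0 ≤ t' → t' ≤ d i → PGuard.sat (A.Inv (st i).1) ((st i).2 + t')
  hdisc : ∀ i < k, DiscMove A ((st i).1, (st i).2 + d i) (cc i) (st (i + 1))

/-- Cost of the `i`-th mixed move of a finite run. -/
def FinRun.stepCost {A : PTA Q} {k : ℕ} (ρ : FinRun A k) (i : ℕ) : ℝ :=
  ρ.d i * (A.rate (ρ.st i).1 : ℝ) + ρ.cc i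

/-- Locations of the test/decrement module (for counter `c₁`), plus the entry points
`ExitJ` of module `Mod_j` and `ExitK` of module `Mod_k`. -/
inductive L12
  | A0 | B0 | C0 | A | B | C | C' | D | E1 | E2 | F1 | F2 | G1 | G2 | H1 | H2
  | A2 | B2 | C2 | D2 | ExitJ | ExitK
  deriving DecidableEq

instance instFintypeL12 : Fintype L12 where
  elems := {.A0, .B0, .C0, .A, .B, .C, .C', .D, .E1, .E2, .F1, .F2, .G1, .G2, .H1, .H2,
    .A2, .B2, .C2, .D2, .ExitJ, .ExitK}
  complete := fun x => by cases x <;> simp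

/-- Transitions of the test/decrement module (all of discrete cost 0 except `C₂→D₂`,
of discrete cost 1), including the exits towards `Mod_j` (from `A₀` on `x=1` and from
`H₁`) and towards `Mod_k` (from `D₂`). -/
def trans12 : List (PTrans L12) :=
  [⟨.A0, [(Cmp.lt, 1)], false, .B0, 0⟩,
   ⟨.B0, [(Cmp.eq, 1)], true, .C0, 0⟩,
   ⟨.C0, [], false, .C, 0⟩,
   ⟨.C, [], false, .D, 0⟩,
   ⟨.D, [(Cmp.lt, 1)], false, .A, 0⟩,
   ⟨.A, [], false, .B, 0⟩,
   ⟨.B, [(Cmp.eq, 1)], true, .C, 0⟩,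
   ⟨.C, [], false, .C', 0⟩,
   ⟨.C', [], false, .C, 0⟩,
   ⟨.D, [(Cmp.eq, 1)], true, .E1, 0⟩,
   ⟨.D, [(Cmp.gt, 1)], true, .E2, 0⟩,
   ⟨.E1, [], false, .F1, 0⟩,
   ⟨.E2, [], false, .F2, 0⟩,
   ⟨.F1, [], true, .G1, 0⟩,
   ⟨.F2, [], true, .G2, 0⟩,
   ⟨.G1, [], false, .H1, 0⟩,
   ⟨.G2, [], false, .H2, 0⟩,
   ⟨.H2, [], false, .A2, 0⟩,
   ⟨.A2, [], false, .B2, 0⟩,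
   ⟨.B2, [(Cmp.eq, 1)], true, .C2, 0⟩,
   ⟨.C2, [], false, .D2, 1⟩,
   ⟨.A0, [(Cmp.eq, 1)], false, .ExitJ, 0⟩,
   ⟨.H1, [], false, .ExitJ, 0⟩,
   ⟨.D2, [], false, .ExitK, 0⟩]

/-- The test/decrement module, with cost rates
`A₀,C₀,A,C,C',D,F₁,F₂,H₁,H₂,A₂,C₂,D₂ : 1`, `B₀,B,E₁,E₂,G₁,G₂ : 3`, `B₂ : 2`. -/
def Mod12 : PTA L12 where
  init := .A0
  E := {e | e ∈ trans12}
  finE := List.finite_toSet _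
  Inv := fun _ => []
  rate := fun q => match q with
    | .B0 | .B | .E1 | .E2 | .G1 | .G2 => 3
    | .B2 => 2
    | _ => 1


/-! ### Auxiliary lemmas -/

lemma step_ex {k : ℕ} (ρ : FinRun Mod12 k) (i : ℕ) (h : i < k) :
    ∃ e ∈ trans12, e.src = (ρ.st i).1 ∧ e.tgt = (ρ.st (i+1)).1 ∧
      PGuard.sat e.guard ((ρ.st i).2 + ρ.d i) ∧
      (ρ.st (i+1)).2 = (if e.reset then 0 else (ρ.st i).2 + ρ.d i) ∧
      ρ.cc i = (e.dcost : ℝ) := by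
  obtain ⟨e, he, h1, h2, h3, h4, _, h6⟩ := ρ.hdisc i h
  exact ⟨e, he, h1, h2, h3, h4, h6⟩

lemma succA0 {k : ℕ} (ρ : FinRun Mod12 k) {i : ℕ} (h : i < k)
    (hl : (ρ.st i).1 = L12.A0) :
    ((ρ.st (i+1)).1 = L12.B0 ∧ (ρ.st i).2 + ρ.d i < 1 ∧ (ρ.st (i+1)).2 = (ρ.st i).2 + ρ.d i ∧ ρ.cc i = 0) ∨
    ((ρ.st (i+1)).1 = L12.ExitJ ∧ (ρ.st i).2 + ρ.d i = 1 ∧ (ρ.st (i+1)).2 = (ρ.st i).2 + ρ.d i ∧ ρ.cc i = 0) := by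
  obtain ⟨e, he, hsrc, htgt, hg, hx, hcc⟩ := step_ex ρ i h
  rw [hl] at hsrc
  simp only [trans12, List.mem_cons, List.not_mem_nil, or_false] at he
  rcases he with rfl|rfl|rfl|rfl|rfl|rfl|rfl|rfl|rfl|rfl|rfl|rfl|rfl|rfl|rfl|rfl|rfl|rfl|rfl|rfl|rfl|rfl|rfl|rfl <;>
    simp_all [PGuard.sat, Cmp.sat]

lemma succB0 {k : ℕ} (ρ : FinRun Mod12 k) {i : ℕ} (h : i < k)
    (hl : (ρ.st i).1 = L12.B0) :
    ((ρ.st (i+1)).1 = L12.C0 ∧ (ρ.st i).2 + ρ.d i = 1 ∧ (ρ.st (i+1)).2 = 0 ∧ ρ.cc i = 0) := by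
  obtain ⟨e, he, hsrc, htgt, hg, hx, hcc⟩ := step_ex ρ i h
  rw [hl] at hsrc
  simp only [trans12, List.mem_cons, List.not_mem_nil, or_false] at he
  rcases he with rfl|rfl|rfl|rfl|rfl|rfl|rfl|rfl|rfl|rfl|rfl|rfl|rfl|rfl|rfl|rfl|rfl|rfl|rfl|rfl|rfl|rfl|rfl|rfl <;>
    simp_all [PGuard.sat, Cmp.sat]

lemma succC0 {k : ℕ} (ρ : FinRun Mod12 k) {i : ℕ} (h : i < k)
    (hl : (ρ.st i).1 = L12.C0) :
    ((ρ.st (i+1)).1 = L12.C ∧ (ρ.st (i+1)).2 = (ρ.st i).2 + ρ.d i ∧ ρ.cc i = 0) := by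
  obtain ⟨e, he, hsrc, htgt, hg, hx, hcc⟩ := step_ex ρ i h
  rw [hl] at hsrc
  simp only [trans12, List.mem_cons, List.not_mem_nil, or_false] at he
  rcases he with rfl|rfl|rfl|rfl|rfl|rfl|rfl|rfl|rfl|rfl|rfl|rfl|rfl|rfl|rfl|rfl|rfl|rfl|rfl|rfl|rfl|rfl|rfl|rfl <;>
    simp_all [PGuard.sat, Cmp.sat]

lemma succCp {k : ℕ} (ρ : FinRun Mod12 k) {i : ℕ} (h : i < k)
    (hl : (ρ.st i).1 = L12.C') :
    ((ρ.st (i+1)).1 = L12.C ∧ (ρ.st (i+1)).2 = (ρ.st i).2 + ρ.d i ∧ ρ.cc i = 0) := by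
  obtain ⟨e, he, hsrc, htgt, hg, hx, hcc⟩ := step_ex ρ i h
  rw [hl] at hsrc
  simp only [trans12, List.mem_cons, List.not_mem_nil, or_false] at he
  rcases he with rfl|rfl|rfl|rfl|rfl|rfl|rfl|rfl|rfl|rfl|rfl|rfl|rfl|rfl|rfl|rfl|rfl|rfl|rfl|rfl|rfl|rfl|rfl|rfl <;>
    simp_all [PGuard.sat, Cmp.sat]

lemma succD {k : ℕ} (ρ : FinRun Mod12 k) {i : ℕ} (h : i < k)
    (hl : (ρ.st i).1 = L12.D) :
    ((ρ.st (i+1)).1 = L12.A ∧ (ρ.st i).2 + ρ.d i < 1 ∧ (ρ.st (i+1)).2 = (ρ.st i).2 + ρ.d i ∧ ρ.cc i = 0) ∨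
    ((ρ.st (i+1)).1 = L12.E1 ∧ (ρ.st i).2 + ρ.d i = 1 ∧ (ρ.st (i+1)).2 = 0 ∧ ρ.cc i = 0) ∨
    ((ρ.st (i+1)).1 = L12.E2 ∧ 1 < (ρ.st i).2 + ρ.d i ∧ (ρ.st (i+1)).2 = 0 ∧ ρ.cc i = 0) := by
  obtain ⟨e, he, hsrc, htgt, hg, hx, hcc⟩ := step_ex ρ i h
  rw [hl] at hsrc
  simp only [trans12, List.mem_cons, List.not_mem_nil, or_false] at he
  rcases he with rfl|rfl|rfl|rfl|rfl|rfl|rfl|rfl|rfl|rfl|rfl|rfl|rfl|rfl|rfl|rfl|rfl|rfl|rfl|rfl|rfl|rfl|rfl|rfl <;>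
    simp_all [PGuard.sat, Cmp.sat]

lemma succA {k : ℕ} (ρ : FinRun Mod12 k) {i : ℕ} (h : i < k)
    (hl : (ρ.st i).1 = L12.A) :
    ((ρ.st (i+1)).1 = L12.B ∧ (ρ.st (i+1)).2 = (ρ.st i).2 + ρ.d i ∧ ρ.cc i = 0) := by
  obtain ⟨e, he, hsrc, htgt, hg, hx, hcc⟩ := step_ex ρ i h
  rw [hl] at hsrc
  simp only [trans12, List.mem_cons, List.not_mem_nil, or_false] at he
  rcases he with rfl|rfl|rfl|rfl|rfl|rfl|rfl|rfl|rfl|rfl|rfl|rfl|rfl|rfl|rfl|rfl|rfl|rfl|rfl|rfl|rfl|rfl|rfl|rfl <;>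
    simp_all [PGuard.sat, Cmp.sat]

lemma succB {k : ℕ} (ρ : FinRun Mod12 k) {i : ℕ} (h : i < k)
    (hl : (ρ.st i).1 = L12.B) :
    ((ρ.st (i+1)).1 = L12.C ∧ (ρ.st i).2 + ρ.d i = 1 ∧ (ρ.st (i+1)).2 = 0 ∧ ρ.cc i = 0) := by
  obtain ⟨e, he, hsrc, htgt, hg, hx, hcc⟩ := step_ex ρ i h
  rw [hl] at hsrc
  simp only [trans12, List.mem_cons, List.not_mem_nil, or_false] at he
  rcases he with rfl|rfl|rfl|rfl|rfl|rfl|rfl|rfl|rfl|rfl|rfl|rfl|rfl|rfl|rfl|rfl|rfl|rfl|rfl|rfl|rfl|rfl|rfl|rfl <;>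
    simp_all [PGuard.sat, Cmp.sat]

lemma succE1 {k : ℕ} (ρ : FinRun Mod12 k) {i : ℕ} (h : i < k)
    (hl : (ρ.st i).1 = L12.E1) :
    ((ρ.st (i+1)).1 = L12.F1 ∧ (ρ.st (i+1)).2 = (ρ.st i).2 + ρ.d i ∧ ρ.cc i = 0) := by
  obtain ⟨e, he, hsrc, htgt, hg, hx, hcc⟩ := step_ex ρ i h
  rw [hl] at hsrc
  simp only [trans12, List.mem_cons, List.not_mem_nil, or_false] at he
  rcases he with rfl|rfl|rfl|rfl|rfl|rfl|rfl|rfl|rfl|rfl|rfl|rfl|rfl|rfl|rfl|rfl|rfl|rfl|rfl|rfl|rfl|rfl|rfl|rfl <;>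
    simp_all [PGuard.sat, Cmp.sat]

lemma succF1 {k : ℕ} (ρ : FinRun Mod12 k) {i : ℕ} (h : i < k)
    (hl : (ρ.st i).1 = L12.F1) :
    ((ρ.st (i+1)).1 = L12.G1 ∧ (ρ.st (i+1)).2 = 0 ∧ ρ.cc i = 0) := by
  obtain ⟨e, he, hsrc, htgt, hg, hx, hcc⟩ := step_ex ρ i h
  rw [hl] at hsrc
  simp only [trans12, List.mem_cons, List.not_mem_nil, or_false] at he
  rcases he with rfl|rfl|rfl|rfl|rfl|rfl|rfl|rfl|rfl|rfl|rfl|rfl|rfl|rfl|rfl|rfl|rfl|rfl|rfl|rfl|rfl|rfl|rfl|rfl <;>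
    simp_all [PGuard.sat, Cmp.sat]

lemma succG1 {k : ℕ} (ρ : FinRun Mod12 k) {i : ℕ} (h : i < k)
    (hl : (ρ.st i).1 = L12.G1) :
    ((ρ.st (i+1)).1 = L12.H1 ∧ (ρ.st (i+1)).2 = (ρ.st i).2 + ρ.d i ∧ ρ.cc i = 0) := by
  obtain ⟨e, he, hsrc, htgt, hg, hx, hcc⟩ := step_ex ρ i h
  rw [hl] at hsrc
  simp only [trans12, List.mem_cons, List.not_mem_nil, or_false] at he
  rcases he with rfl|rfl|rfl|rfl|rfl|rfl|rfl|rfl|rfl|rfl|rfl|rfl|rfl|rfl|rfl|rfl|rfl|rfl|rfl|rfl|rfl|rfl|rfl|rfl <;>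
    simp_all [PGuard.sat, Cmp.sat]

lemma succH1 {k : ℕ} (ρ : FinRun Mod12 k) {i : ℕ} (h : i < k)
    (hl : (ρ.st i).1 = L12.H1) :
    ((ρ.st (i+1)).1 = L12.ExitJ ∧ (ρ.st (i+1)).2 = (ρ.st i).2 + ρ.d i ∧ ρ.cc i = 0) := by
  obtain ⟨e, he, hsrc, htgt, hg, hx, hcc⟩ := step_ex ρ i h
  rw [hl] at hsrc
  simp only [trans12, List.mem_cons, List.not_mem_nil, or_false] at he
  rcases he with rfl|rfl|rfl|rfl|rfl|rfl|rfl|rfl|rfl|rfl|rfl|rfl|rfl|rfl|rfl|rfl|rfl|rfl|rfl|rfl|rfl|rfl|rfl|rfl <;>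
    simp_all [PGuard.sat, Cmp.sat]

lemma succE2 {k : ℕ} (ρ : FinRun Mod12 k) {i : ℕ} (h : i < k)
    (hl : (ρ.st i).1 = L12.E2) :
    ((ρ.st (i+1)).1 = L12.F2 ∧ (ρ.st (i+1)).2 = (ρ.st i).2 + ρ.d i ∧ ρ.cc i = 0) := by
  obtain ⟨e, he, hsrc, htgt, hg, hx, hcc⟩ := step_ex ρ i h
  rw [hl] at hsrc
  simp only [trans12, List.mem_cons, List.not_mem_nil, or_false] at he
  rcases he with rfl|rfl|rfl|rfl|rfl|rfl|rfl|rfl|rfl|rfl|rfl|rfl|rfl|rfl|rfl|rfl|rfl|rfl|rfl|rfl|rfl|rfl|rfl|rfl <;>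
    simp_all [PGuard.sat, Cmp.sat]

lemma succF2 {k : ℕ} (ρ : FinRun Mod12 k) {i : ℕ} (h : i < k)
    (hl : (ρ.st i).1 = L12.F2) :
    ((ρ.st (i+1)).1 = L12.G2 ∧ (ρ.st (i+1)).2 = 0 ∧ ρ.cc i = 0) := by
  obtain ⟨e, he, hsrc, htgt, hg, hx, hcc⟩ := step_ex ρ i h
  rw [hl] at hsrc
  simp only [trans12, List.mem_cons, List.not_mem_nil, or_false] at he
  rcases he with rfl|rfl|rfl|rfl|rfl|rfl|rfl|rfl|rfl|rfl|rfl|rfl|rfl|rfl|rfl|rfl|rfl|rfl|rfl|rfl|rfl|rfl|rfl|rfl <;>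
    simp_all [PGuard.sat, Cmp.sat]

lemma succG2 {k : ℕ} (ρ : FinRun Mod12 k) {i : ℕ} (h : i < k)
    (hl : (ρ.st i).1 = L12.G2) :
    ((ρ.st (i+1)).1 = L12.H2 ∧ (ρ.st (i+1)).2 = (ρ.st i).2 + ρ.d i ∧ ρ.cc i = 0) := by
  obtain ⟨e, he, hsrc, htgt, hg, hx, hcc⟩ := step_ex ρ i h
  rw [hl] at hsrc
  simp only [trans12, List.mem_cons, List.not_mem_nil, or_false] at he
  rcases he with rfl|rfl|rfl|rfl|rfl|rfl|rfl|rfl|rfl|rfl|rfl|rfl|rfl|rfl|rfl|rfl|rfl|rfl|rfl|rfl|rfl|rfl|rfl|rfl <;>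
    simp_all [PGuard.sat, Cmp.sat]

lemma succH2 {k : ℕ} (ρ : FinRun Mod12 k) {i : ℕ} (h : i < k)
    (hl : (ρ.st i).1 = L12.H2) :
    ((ρ.st (i+1)).1 = L12.A2 ∧ (ρ.st (i+1)).2 = (ρ.st i).2 + ρ.d i ∧ ρ.cc i = 0) := by
  obtain ⟨e, he, hsrc, htgt, hg, hx, hcc⟩ := step_ex ρ i h
  rw [hl] at hsrc
  simp only [trans12, List.mem_cons, List.not_mem_nil, or_false] at he
  rcases he with rfl|rfl|rfl|rfl|rfl|rfl|rfl|rfl|rfl|rfl|rfl|rfl|rfl|rfl|rfl|rfl|rfl|rfl|rfl|rfl|rfl|rfl|rfl|rfl <;>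
    simp_all [PGuard.sat, Cmp.sat]

lemma succA2 {k : ℕ} (ρ : FinRun Mod12 k) {i : ℕ} (h : i < k)
    (hl : (ρ.st i).1 = L12.A2) :
    ((ρ.st (i+1)).1 = L12.B2 ∧ (ρ.st (i+1)).2 = (ρ.st i).2 + ρ.d i ∧ ρ.cc i = 0) := by
  obtain ⟨e, he, hsrc, htgt, hg, hx, hcc⟩ := step_ex ρ i h
  rw [hl] at hsrc
  simp only [trans12, List.mem_cons, List.not_mem_nil, or_false] at he
  rcases he with rfl|rfl|rfl|rfl|rfl|rfl|rfl|rfl|rfl|rfl|rfl|rfl|rfl|rfl|rfl|rfl|rfl|rfl|rfl|rfl|rfl|rfl|rfl|rfl <;>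
    simp_all [PGuard.sat, Cmp.sat]

lemma succB2 {k : ℕ} (ρ : FinRun Mod12 k) {i : ℕ} (h : i < k)
    (hl : (ρ.st i).1 = L12.B2) :
    ((ρ.st (i+1)).1 = L12.C2 ∧ (ρ.st i).2 + ρ.d i = 1 ∧ (ρ.st (i+1)).2 = 0 ∧ ρ.cc i = 0) := by
  obtain ⟨e, he, hsrc, htgt, hg, hx, hcc⟩ := step_ex ρ i h
  rw [hl] at hsrc
  simp only [trans12, List.mem_cons, List.not_mem_nil, or_false] at he
  rcases he with rfl|rfl|rfl|rfl|rfl|rfl|rfl|rfl|rfl|rfl|rfl|rfl|rfl|rfl|rfl|rfl|rfl|rfl|rfl|rfl|rfl|rfl|rfl|rfl <;>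
    simp_all [PGuard.sat, Cmp.sat]

lemma succC2 {k : ℕ} (ρ : FinRun Mod12 k) {i : ℕ} (h : i < k)
    (hl : (ρ.st i).1 = L12.C2) :
    ((ρ.st (i+1)).1 = L12.D2 ∧ (ρ.st (i+1)).2 = (ρ.st i).2 + ρ.d i ∧ ρ.cc i = 1) := by
  obtain ⟨e, he, hsrc, htgt, hg, hx, hcc⟩ := step_ex ρ i h
  rw [hl] at hsrc
  simp only [trans12, List.mem_cons, List.not_mem_nil, or_false] at he
  rcases he with rfl|rfl|rfl|rfl|rfl|rfl|rfl|rfl|rfl|rfl|rfl|rfl|rfl|rfl|rfl|rfl|rfl|rfl|rfl|rfl|rfl|rfl|rfl|rfl <;>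
    simp_all [PGuard.sat, Cmp.sat]

lemma succD2 {k : ℕ} (ρ : FinRun Mod12 k) {i : ℕ} (h : i < k)
    (hl : (ρ.st i).1 = L12.D2) :
    ((ρ.st (i+1)).1 = L12.ExitK ∧ (ρ.st (i+1)).2 = (ρ.st i).2 + ρ.d i ∧ ρ.cc i = 0) := by
  obtain ⟨e, he, hsrc, htgt, hg, hx, hcc⟩ := step_ex ρ i h
  rw [hl] at hsrc
  simp only [trans12, List.mem_cons, List.not_mem_nil, or_false] at he
  rcases he with rfl|rfl|rfl|rfl|rfl|rfl|rfl|rfl|rfl|rfl|rfl|rfl|rfl|rfl|rfl|rfl|rfl|rfl|rfl|rfl|rfl|rfl|rfl|rfl <;>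
    simp_all [PGuard.sat, Cmp.sat]

lemma succExitJ {k : ℕ} (ρ : FinRun Mod12 k) {i : ℕ} (h : i < k)
    (hl : (ρ.st i).1 = L12.ExitJ) : False := by
  obtain ⟨e, he, hsrc, htgt, hg, hx, hcc⟩ := step_ex ρ i h
  rw [hl] at hsrc
  simp only [trans12, List.mem_cons, List.not_mem_nil, or_false] at he
  rcases he with rfl|rfl|rfl|rfl|rfl|rfl|rfl|rfl|rfl|rfl|rfl|rfl|rfl|rfl|rfl|rfl|rfl|rfl|rfl|rfl|rfl|rfl|rfl|rfl <;>
    simp_all [PGuard.sat, Cmp.sat]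

lemma succExitK {k : ℕ} (ρ : FinRun Mod12 k) {i : ℕ} (h : i < k)
    (hl : (ρ.st i).1 = L12.ExitK) : False := by
  obtain ⟨e, he, hsrc, htgt, hg, hx, hcc⟩ := step_ex ρ i h
  rw [hl] at hsrc
  simp only [trans12, List.mem_cons, List.not_mem_nil, or_false] at he
  rcases he with rfl|rfl|rfl|rfl|rfl|rfl|rfl|rfl|rfl|rfl|rfl|rfl|rfl|rfl|rfl|rfl|rfl|rfl|rfl|rfl|rfl|rfl|rfl|rfl <;>
    simp_all [PGuard.sat, Cmp.sat]

lemma predExitK {k : ℕ} (ρ : FinRun Mod12 k) {i : ℕ} (h : i < k)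
    (hl : (ρ.st (i+1)).1 = L12.ExitK) :
    (ρ.st i).1 = L12.D2 ∧ (ρ.st (i+1)).2 = (ρ.st i).2 + ρ.d i ∧ ρ.cc i = 0 := by
  obtain ⟨e, he, hsrc, htgt, hg, hx, hcc⟩ := step_ex ρ i h
  rw [hl] at htgt; clear hl
  simp only [trans12, List.mem_cons, List.not_mem_nil, or_false] at he
  rcases he with rfl|rfl|rfl|rfl|rfl|rfl|rfl|rfl|rfl|rfl|rfl|rfl|rfl|rfl|rfl|rfl|rfl|rfl|rfl|rfl|rfl|rfl|rfl|rfl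
  all_goals try exact absurd htgt (by decide)
  all_goals simp_all [PGuard.sat, Cmp.sat]

lemma predD2 {k : ℕ} (ρ : FinRun Mod12 k) {i : ℕ} (h : i < k)
    (hl : (ρ.st (i+1)).1 = L12.D2) :
    (ρ.st i).1 = L12.C2 ∧ (ρ.st (i+1)).2 = (ρ.st i).2 + ρ.d i ∧ ρ.cc i = 1 := by
  obtain ⟨e, he, hsrc, htgt, hg, hx, hcc⟩ := step_ex ρ i h
  rw [hl] at htgt; clear hl
  simp only [trans12, List.mem_cons, List.not_mem_nil, or_false] at he
  rcases he with rfl|rfl|rfl|rfl|rfl|rfl|rfl|rfl|rfl|rfl|rfl|rfl|rfl|rfl|rfl|rfl|rfl|rfl|rfl|rfl|rfl|rfl|rfl|rfl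
  all_goals try exact absurd htgt (by decide)
  all_goals simp_all [PGuard.sat, Cmp.sat]

lemma predC2 {k : ℕ} (ρ : FinRun Mod12 k) {i : ℕ} (h : i < k)
    (hl : (ρ.st (i+1)).1 = L12.C2) :
    (ρ.st i).1 = L12.B2 ∧ (ρ.st i).2 + ρ.d i = 1 ∧ (ρ.st (i+1)).2 = 0 ∧ ρ.cc i = 0 := by
  obtain ⟨e, he, hsrc, htgt, hg, hx, hcc⟩ := step_ex ρ i h
  rw [hl] at htgt; clear hl
  simp only [trans12, List.mem_cons, List.not_mem_nil, or_false] at he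
  rcases he with rfl|rfl|rfl|rfl|rfl|rfl|rfl|rfl|rfl|rfl|rfl|rfl|rfl|rfl|rfl|rfl|rfl|rfl|rfl|rfl|rfl|rfl|rfl|rfl
  all_goals try exact absurd htgt (by decide)
  all_goals simp_all [PGuard.sat, Cmp.sat]

lemma predB2 {k : ℕ} (ρ : FinRun Mod12 k) {i : ℕ} (h : i < k)
    (hl : (ρ.st (i+1)).1 = L12.B2) :
    (ρ.st i).1 = L12.A2 ∧ (ρ.st (i+1)).2 = (ρ.st i).2 + ρ.d i ∧ ρ.cc i = 0 := by
  obtain ⟨e, he, hsrc, htgt, hg, hx, hcc⟩ := step_ex ρ i h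
  rw [hl] at htgt; clear hl
  simp only [trans12, List.mem_cons, List.not_mem_nil, or_false] at he
  rcases he with rfl|rfl|rfl|rfl|rfl|rfl|rfl|rfl|rfl|rfl|rfl|rfl|rfl|rfl|rfl|rfl|rfl|rfl|rfl|rfl|rfl|rfl|rfl|rfl
  all_goals try exact absurd htgt (by decide)
  all_goals simp_all [PGuard.sat, Cmp.sat]

lemma predA2 {k : ℕ} (ρ : FinRun Mod12 k) {i : ℕ} (h : i < k)
    (hl : (ρ.st (i+1)).1 = L12.A2) :
    (ρ.st i).1 = L12.H2 ∧ (ρ.st (i+1)).2 = (ρ.st i).2 + ρ.d i ∧ ρ.cc i = 0 := by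
  obtain ⟨e, he, hsrc, htgt, hg, hx, hcc⟩ := step_ex ρ i h
  rw [hl] at htgt; clear hl
  simp only [trans12, List.mem_cons, List.not_mem_nil, or_false] at he
  rcases he with rfl|rfl|rfl|rfl|rfl|rfl|rfl|rfl|rfl|rfl|rfl|rfl|rfl|rfl|rfl|rfl|rfl|rfl|rfl|rfl|rfl|rfl|rfl|rfl
  all_goals try exact absurd htgt (by decide)
  all_goals simp_all [PGuard.sat, Cmp.sat]

lemma predH2 {k : ℕ} (ρ : FinRun Mod12 k) {i : ℕ} (h : i < k)
    (hl : (ρ.st (i+1)).1 = L12.H2) :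
    (ρ.st i).1 = L12.G2 ∧ (ρ.st (i+1)).2 = (ρ.st i).2 + ρ.d i ∧ ρ.cc i = 0 := by
  obtain ⟨e, he, hsrc, htgt, hg, hx, hcc⟩ := step_ex ρ i h
  rw [hl] at htgt; clear hl
  simp only [trans12, List.mem_cons, List.not_mem_nil, or_false] at he
  rcases he with rfl|rfl|rfl|rfl|rfl|rfl|rfl|rfl|rfl|rfl|rfl|rfl|rfl|rfl|rfl|rfl|rfl|rfl|rfl|rfl|rfl|rfl|rfl|rfl
  all_goals try exact absurd htgt (by decide)
  all_goals simp_all [PGuard.sat, Cmp.sat]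

lemma predG2 {k : ℕ} (ρ : FinRun Mod12 k) {i : ℕ} (h : i < k)
    (hl : (ρ.st (i+1)).1 = L12.G2) :
    (ρ.st i).1 = L12.F2 ∧ (ρ.st (i+1)).2 = 0 ∧ ρ.cc i = 0 := by
  obtain ⟨e, he, hsrc, htgt, hg, hx, hcc⟩ := step_ex ρ i h
  rw [hl] at htgt; clear hl
  simp only [trans12, List.mem_cons, List.not_mem_nil, or_false] at he
  rcases he with rfl|rfl|rfl|rfl|rfl|rfl|rfl|rfl|rfl|rfl|rfl|rfl|rfl|rfl|rfl|rfl|rfl|rfl|rfl|rfl|rfl|rfl|rfl|rfl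
  all_goals try exact absurd htgt (by decide)
  all_goals simp_all [PGuard.sat, Cmp.sat]

lemma predF2 {k : ℕ} (ρ : FinRun Mod12 k) {i : ℕ} (h : i < k)
    (hl : (ρ.st (i+1)).1 = L12.F2) :
    (ρ.st i).1 = L12.E2 ∧ (ρ.st (i+1)).2 = (ρ.st i).2 + ρ.d i ∧ ρ.cc i = 0 := by
  obtain ⟨e, he, hsrc, htgt, hg, hx, hcc⟩ := step_ex ρ i h
  rw [hl] at htgt; clear hl
  simp only [trans12, List.mem_cons, List.not_mem_nil, or_false] at he
  rcases he with rfl|rfl|rfl|rfl|rfl|rfl|rfl|rfl|rfl|rfl|rfl|rfl|rfl|rfl|rfl|rfl|rfl|rfl|rfl|rfl|rfl|rfl|rfl|rfl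
  all_goals try exact absurd htgt (by decide)
  all_goals simp_all [PGuard.sat, Cmp.sat]

lemma predE2 {k : ℕ} (ρ : FinRun Mod12 k) {i : ℕ} (h : i < k)
    (hl : (ρ.st (i+1)).1 = L12.E2) :
    (ρ.st i).1 = L12.D ∧ 1 < (ρ.st i).2 + ρ.d i ∧ (ρ.st (i+1)).2 = 0 ∧ ρ.cc i = 0 := by
  obtain ⟨e, he, hsrc, htgt, hg, hx, hcc⟩ := step_ex ρ i h
  rw [hl] at htgt; clear hl
  simp only [trans12, List.mem_cons, List.not_mem_nil, or_false] at he
  rcases he with rfl|rfl|rfl|rfl|rfl|rfl|rfl|rfl|rfl|rfl|rfl|rfl|rfl|rfl|rfl|rfl|rfl|rfl|rfl|rfl|rfl|rfl|rfl|rfl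
  all_goals try exact absurd htgt (by decide)
  all_goals simp_all [PGuard.sat, Cmp.sat]

lemma succC {k : ℕ} (ρ : FinRun Mod12 k) {i : ℕ} (h : i < k)
    (hl : (ρ.st i).1 = L12.C) :
    ((ρ.st (i+1)).1 = L12.D ∧ (ρ.st (i+1)).2 = (ρ.st i).2 + ρ.d i ∧ ρ.cc i = 0) ∨
    ((ρ.st (i+1)).1 = L12.C' ∧ (ρ.st (i+1)).2 = (ρ.st i).2 + ρ.d i ∧ ρ.cc i = 0) := by
  obtain ⟨e, he, hsrc, htgt, hg, hx, hcc⟩ := step_ex ρ i h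
  rw [hl] at hsrc
  simp only [trans12, List.mem_cons, List.not_mem_nil, or_false] at he
  rcases he with rfl|rfl|rfl|rfl|rfl|rfl|rfl|rfl|rfl|rfl|rfl|rfl|rfl|rfl|rfl|rfl|rfl|rfl|rfl|rfl|rfl|rfl|rfl|rfl <;>
    simp_all [PGuard.sat, Cmp.sat]


lemma stepCost_nonneg {k : ℕ} (ρ : FinRun Mod12 k) {r : ℕ} (h : r < k) :
    0 ≤ ρ.stepCost r := by
  obtain ⟨e, he, _, _, _, _, hcc⟩ := step_ex ρ r h
  have hd := (ρ.hdel r h).1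
  unfold FinRun.stepCost
  have h1 : (0:ℝ) ≤ ρ.cc r := by rw [hcc]; positivity
  have h2 : (0:ℝ) ≤ ρ.d r * ((Mod12.rate (ρ.st r).1 : ℕ) : ℝ) := by positivity
  linarith

lemma costE {k : ℕ} (ρ : FinRun Mod12 k) {r : ℕ} {l : L12} (hl : (ρ.st r).1 = l) :
    ρ.stepCost r = ρ.d r * ((Mod12.rate l : ℕ) : ℝ) + ρ.cc r := by
  unfold FinRun.stepCost; rw [hl]

lemma sum_split {k : ℕ} (ρ : FinRun Mod12 k) {a b c : ℕ} (h1 : a ≤ b) (h2 : b ≤ c) :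
    ∑ r ∈ Finset.Ico a c, ρ.stepCost r =
      (∑ r ∈ Finset.Ico a b, ρ.stepCost r) + ∑ r ∈ Finset.Ico b c, ρ.stepCost r :=
  (Finset.sum_Ico_consecutive _ h1 h2).symm

lemma sum_one' {k : ℕ} (ρ : FinRun Mod12 k) (a b : ℕ) (h : b = a + 1) :
    ∑ r ∈ Finset.Ico a b, ρ.stepCost r = ρ.stepCost a := by subst h; simp

lemma sumIco {k : ℕ} (ρ : FinRun Mod12 k) (a n : ℕ) :
    ∑ r ∈ Finset.Ico a (a+n), ρ.stepCost r = ∑ j ∈ Finset.range n, ρ.stepCost (a+j) := by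
  rw [Finset.sum_Ico_eq_sum_range]; simp

lemma sum_nn {k : ℕ} (ρ : FinRun Mod12 k) {a b : ℕ} (h : b ≤ k) :
    0 ≤ ∑ r ∈ Finset.Ico a b, ρ.stepCost r :=
  Finset.sum_nonneg fun r hr => stepCost_nonneg ρ (lt_of_lt_of_le (Finset.mem_Ico.mp hr).2 h)

/-- The invariant carried along the main induction, at a visit of location `C`. -/
structure MInv {k : ℕ} (ρ : FinRun Mod12 k) (x₀ : ℝ) (T i m α q : ℕ) : Prop where
  hmi : m < i
  hai : α < i
  hiT : i ≤ T
  hlocI : (ρ.st i).1 = L12.C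
  hlocM : (ρ.st m).1 = L12.C0 ∨ (ρ.st m).1 = L12.C'
  hlocA : (ρ.st α).1 = L12.A ∨ (ρ.st α).1 = L12.A0
  hxI : 0 ≤ (ρ.st i).2
  hxM : 0 ≤ (ρ.st m).2
  hw0 : 0 ≤ (ρ.st α).2
  hw1 : (ρ.st α).2 < 1
  hwq : (ρ.st α).2 = 3 ^ q * x₀
  hnomk : ∀ r, m < r → r ≤ i → ¬((ρ.st r).1 = L12.C' ∨ (ρ.st r).1 = L12.F2)
  hnoD : ∀ r, α < r → r ≤ i → (ρ.st r).1 ≠ L12.D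
  hSα : ∑ r ∈ Finset.Ico α i, ρ.stepCost r = 3 * (1 - (ρ.st α).2) + (ρ.st i).2
  hmk : (∑ r ∈ Finset.Ico m i, ρ.stepCost r = (ρ.st i).2 - (ρ.st m).2 ∧
          (ρ.st m).2 ≤ (ρ.st i).2 ∧ (ρ.st m).2 = 3 * (ρ.st α).2 - 3 * x₀)
      ∨ (∑ r ∈ Finset.Ico m i, ρ.stepCost r = 3 - 2 * (ρ.st α).2 - (ρ.st m).2 + (ρ.st i).2 ∧
          (ρ.st m).2 ≤ (ρ.st α).2 ∧ (ρ.st m).2 = (ρ.st α).2 - 3 * x₀)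

set_option maxHeartbeats 4000000 in
/-- **Lemma 14.** Suppose a run `ρ` enters the test/decrement module at
`A₀` with clock value `x₀ ≤ 1` and exits towards `Mod_k` with clock value `x₁`, such that:
(i) no time elapses in `A₀, C₀, D, A, C', F₂, H₂, A₂, D₂`; (ii) every visit to `C₀` or `C'`
is eventually strictly followed by a visit to `C'` or `F₂`; (iii) the accumulated cost
equals exactly `3` along each portion of `ρ` between `A` or `A₀` and the next visit to `D`,
along each portion between `C₀` or `C'` and the next visit to `C'` or `F₂`, along the
portion between the last visit to `D` and `H₂`, and along the portion between `H₂` and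
`D₂`. Then `x₁ = 2·x₀` and `x₀ ≠ 3^(-n)` for every `n ∈ ℕ`. -/
theorem stmt13 (x₀ x₁ : ℝ) (hx₀ : 0 ≤ x₀) (hx₁ : x₀ ≤ 1)
    (k : ℕ) (ρ : FinRun Mod12 k)
    (hstart : ρ.st 0 = (L12.A0, x₀)) (hend : ρ.st k = (L12.ExitK, x₁))
    (hnotime : ∀ i < k,
      (ρ.st i).1 ∈ ([L12.A0, L12.C0, L12.D, L12.A, L12.C', L12.F2, L12.H2,
        L12.A2, L12.D2] : List L12) → ρ.d i = 0)
    (hfollow : ∀ i ≤ k, ((ρ.st i).1 = L12.C0 ∨ (ρ.st i).1 = L12.C') →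
      ∃ j, i < j ∧ j ≤ k ∧ ((ρ.st j).1 = L12.C' ∨ (ρ.st j).1 = L12.F2))
    (hcost₁ : ∀ i j : ℕ, i < j → j ≤ k →
      ((ρ.st i).1 = L12.A ∨ (ρ.st i).1 = L12.A0) → (ρ.st j).1 = L12.D →
      (∀ m, i < m → m < j → (ρ.st m).1 ≠ L12.D) →
      ∑ m ∈ Finset.Ico i j, ρ.stepCost m = 3)
    (hcost₂ : ∀ i j : ℕ, i < j → j ≤ k →
      ((ρ.st i).1 = L12.C0 ∨ (ρ.st i).1 = L12.C') →
      ((ρ.st j).1 = L12.C' ∨ (ρ.st j).1 = L12.F2) →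
      (∀ m, i < m → m < j → ¬((ρ.st m).1 = L12.C' ∨ (ρ.st m).1 = L12.F2)) →
      ∑ m ∈ Finset.Ico i j, ρ.stepCost m = 3)
    (hcost₃ : ∀ i j : ℕ, i < j → j ≤ k →
      (ρ.st i).1 = L12.D → (∀ m, i < m → m ≤ k → (ρ.st m).1 ≠ L12.D) →
      (ρ.st j).1 = L12.H2 →
      ∑ m ∈ Finset.Ico i j, ρ.stepCost m = 3)
    (hcost₄ : ∀ i j : ℕ, i < j → j ≤ k →
      (ρ.st i).1 = L12.H2 → (ρ.st j).1 = L12.D2 →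
      (∀ m, i < m → m < j → (ρ.st m).1 ≠ L12.D2) →
      ∑ m ∈ Finset.Ico i j, ρ.stepCost m = 3) :
    x₁ = 2 * x₀ ∧ ∀ n : ℕ, x₀ ≠ 1 / 3 ^ n := by
  classical
  have hst0 : (ρ.st 0).1 = L12.A0 := by rw [hstart]
  have hx0 : (ρ.st 0).2 = x₀ := by rw [hstart]
  have hstk : (ρ.st k).1 = L12.ExitK := by rw [hend]
  have hxk : (ρ.st k).2 = x₁ := by rw [hend]
  clear hstart hend
  -- peel the last nine steps (the tail E2 F2 G2 H2 A2 B2 C2 D2 ExitK)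
  have hk1 : k ≠ 0 := by
    intro h; subst h; rw [hst0] at hstk; exact absurd hstk (by decide)
  obtain ⟨j1, rfl⟩ : ∃ t, k = t + 1 := ⟨k - 1, by omega⟩
  have p1 := predExitK ρ (by omega) hstk
  have hk2 : j1 ≠ 0 := by
    intro h; subst h; have := p1.1; rw [hst0] at this; exact absurd this (by decide)
  obtain ⟨j2, rfl⟩ : ∃ t, j1 = t + 1 := ⟨j1 - 1, by omega⟩
  have p2 := predD2 ρ (by omega) p1.1
  have hk3 : j2 ≠ 0 := by
    intro h; subst h; have := p2.1; rw [hst0] at this; exact absurd this (by decide)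
  obtain ⟨j3, rfl⟩ : ∃ t, j2 = t + 1 := ⟨j2 - 1, by omega⟩
  have p3 := predC2 ρ (by omega) p2.1
  have hk4 : j3 ≠ 0 := by
    intro h; subst h; have := p3.1; rw [hst0] at this; exact absurd this (by decide)
  obtain ⟨j4, rfl⟩ : ∃ t, j3 = t + 1 := ⟨j3 - 1, by omega⟩
  have p4 := predB2 ρ (by omega) p3.1
  have hk5 : j4 ≠ 0 := by
    intro h; subst h; have := p4.1; rw [hst0] at this; exact absurd this (by decide)
  obtain ⟨j5, rfl⟩ : ∃ t, j4 = t + 1 := ⟨j4 - 1, by omega⟩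
  have p5 := predA2 ρ (by omega) p4.1
  have hk6 : j5 ≠ 0 := by
    intro h; subst h; have := p5.1; rw [hst0] at this; exact absurd this (by decide)
  obtain ⟨j6, rfl⟩ : ∃ t, j5 = t + 1 := ⟨j5 - 1, by omega⟩
  have p6 := predH2 ρ (by omega) p5.1
  have hk7 : j6 ≠ 0 := by
    intro h; subst h; have := p6.1; rw [hst0] at this; exact absurd this (by decide)
  obtain ⟨j7, rfl⟩ : ∃ t, j6 = t + 1 := ⟨j6 - 1, by omega⟩
  have p7 := predG2 ρ (by omega) p6.1
  have hk8 : j7 ≠ 0 := by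
    intro h; subst h; have := p7.1; rw [hst0] at this; exact absurd this (by decide)
  obtain ⟨j8, rfl⟩ : ∃ t, j7 = t + 1 := ⟨j7 - 1, by omega⟩
  have p8 := predF2 ρ (by omega) p7.1
  have hk9 : j8 ≠ 0 := by
    intro h; subst h; have := p8.1; rw [hst0] at this; exact absurd this (by decide)
  obtain ⟨T, rfl⟩ : ∃ t, j8 = t + 1 := ⟨j8 - 1, by omega⟩
  have p9 := predE2 ρ (by omega) p8.1
  -- clean tail facts
  have hLT : (ρ.st T).1 = L12.D := p9.1
  have hLT1 : (ρ.st (T+1)).1 = L12.E2 := p8.1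
  have hLT2 : (ρ.st (T+2)).1 = L12.F2 := p7.1
  have hLT3 : (ρ.st (T+3)).1 = L12.G2 := p6.1
  have hLT4 : (ρ.st (T+4)).1 = L12.H2 := p5.1
  have hLT5 : (ρ.st (T+5)).1 = L12.A2 := p4.1
  have hLT6 : (ρ.st (T+6)).1 = L12.B2 := p3.1
  have hLT7 : (ρ.st (T+7)).1 = L12.C2 := p2.1
  have hLT8 : (ρ.st (T+8)).1 = L12.D2 := p1.1
  have hLT9 : (ρ.st (T+9)).1 = L12.ExitK := hstk
  have hdT : ρ.d T = 0 := hnotime T (by omega) (by simp [hLT])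
  have hdT2 : ρ.d (T+2) = 0 := hnotime (T+2) (by omega) (by simp [hLT2])
  have hdT4 : ρ.d (T+4) = 0 := hnotime (T+4) (by omega) (by simp [hLT4])
  have hdT5 : ρ.d (T+5) = 0 := hnotime (T+5) (by omega) (by simp [hLT5])
  have hdT8 : ρ.d (T+8) = 0 := hnotime (T+8) (by omega) (by simp [hLT8])
  have hxT1 : (ρ.st (T+1)).2 = 0 := p9.2.2.1
  have hyT : 1 < (ρ.st T).2 := by have := p9.2.1; rw [hdT] at this; linarith
  have hxT2 : (ρ.st (T+2)).2 = ρ.d (T+1) := by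
    have h := p8.2.1; rw [hxT1] at h; rw [h]; ring
  have hxT3 : (ρ.st (T+3)).2 = 0 := p7.2.1
  have hxT4 : (ρ.st (T+4)).2 = ρ.d (T+3) := by
    have h := p6.2.1; rw [hxT3] at h; rw [h]; ring
  have hxT5 : (ρ.st (T+5)).2 = ρ.d (T+3) := by
    have h := p5.2.1; rw [hxT4, hdT4] at h; rw [h]; ring
  have hxT6 : (ρ.st (T+6)).2 = ρ.d (T+3) := by
    have h := p4.2.1; rw [hxT5, hdT5] at h; rw [h]; ring
  have hgB2 : (ρ.st (T+6)).2 + ρ.d (T+6) = 1 := p3.2.1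
  have hxT7 : (ρ.st (T+7)).2 = 0 := p3.2.2.1
  have hxT8 : (ρ.st (T+8)).2 = ρ.d (T+7) := by
    have h := p2.2.1; rw [hxT7] at h; rw [h]; ring
  have hx₁v : x₁ = ρ.d (T+7) := by
    have h := p1.2.1; rw [hxT8, hdT8] at h; rw [← hxk, h]; ring
  -- step costs in the tail
  have cT : ρ.stepCost T = 0 := by rw [costE ρ hLT, hdT, p9.2.2.2]; norm_num
  have cT1 : ρ.stepCost (T+1) = 3 * ρ.d (T+1) := by
    rw [costE ρ hLT1, p8.2.2]; norm_num [Mod12]; ring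
  have cT2 : ρ.stepCost (T+2) = 0 := by rw [costE ρ hLT2, hdT2, p7.2.2]; norm_num
  have cT3 : ρ.stepCost (T+3) = 3 * ρ.d (T+3) := by
    rw [costE ρ hLT3, p6.2.2]; norm_num [Mod12]; ring
  have cT4 : ρ.stepCost (T+4) = 0 := by rw [costE ρ hLT4, hdT4, p5.2.2]; norm_num
  have cT5 : ρ.stepCost (T+5) = 0 := by rw [costE ρ hLT5, hdT5, p4.2.2]; norm_num
  have cT6 : ρ.stepCost (T+6) = 2 * ρ.d (T+6) := by
    rw [costE ρ hLT6, p3.2.2.2]; norm_num [Mod12]; ring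
  have cT7 : ρ.stepCost (T+7) = ρ.d (T+7) + 1 := by
    rw [costE ρ hLT7, p2.2.2]; norm_num [Mod12]
  -- the two tail cost constraints
  have hnoDtail : ∀ r, T < r → r ≤ T+9 → (ρ.st r).1 ≠ L12.D := by
    intro r h1 h2
    have : r = T+1 ∨ r = T+2 ∨ r = T+3 ∨ r = T+4 ∨ r = T+5 ∨ r = T+6 ∨ r = T+7 ∨
        r = T+8 ∨ r = T+9 := by omega
    rcases this with rfl|rfl|rfl|rfl|rfl|rfl|rfl|rfl|rfl <;>
      simp [hLT1, hLT2, hLT3, hLT4, hLT5, hLT6, hLT7, hLT8, hLT9]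
  have hc3 := hcost₃ T (T+4) (by omega) (by omega) hLT hnoDtail hLT4
  rw [sumIco ρ T 4] at hc3
  simp only [Finset.sum_range_succ, Finset.sum_range_zero, zero_add, Nat.add_zero] at hc3
  rw [cT, cT1, cT2, cT3] at hc3
  have hsum1 : ρ.d (T+1) + ρ.d (T+3) = 1 := by linarith
  have hnoD2tail : ∀ r, T+4 < r → r < T+4+4 → (ρ.st r).1 ≠ L12.D2 := by
    intro r h1 h2
    have : r = T+5 ∨ r = T+6 ∨ r = T+7 := by omega
    rcases this with rfl|rfl|rfl <;> simp [hLT5, hLT6, hLT7]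
  have hc4 := hcost₄ (T+4) (T+4+4) (by omega) (by omega) hLT4 hLT8 hnoD2tail
  rw [sumIco ρ (T+4) 4] at hc4
  simp only [Finset.sum_range_succ, Finset.sum_range_zero, zero_add, Nat.add_zero] at hc4
  have hc4' : ρ.stepCost (T+4) + ρ.stepCost (T+5) + ρ.stepCost (T+6) + ρ.stepCost (T+7)
      = 3 := hc4
  rw [cT4, cT5, cT6, cT7] at hc4'
  have hsum2 : ρ.d (T+7) = 2 * ρ.d (T+3) := by
    have h := hgB2; rw [hxT6] at h; linarith
  have htE0 : 0 ≤ ρ.d (T+1) := (ρ.hdel (T+1) (by omega)).1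
  have htG0 : 0 ≤ ρ.d (T+3) := (ρ.hdel (T+3) (by omega)).1
  -- the first three steps
  have hstep0 : (ρ.st 1).1 = L12.B0 ∧ (ρ.st 0).2 + ρ.d 0 < 1 ∧
      (ρ.st 1).2 = (ρ.st 0).2 + ρ.d 0 ∧ ρ.cc 0 = 0 := by
    rcases succA0 ρ (by omega) hst0 with h | ⟨hEJ, _, _, _⟩
    · exact h
    · exact (succExitJ ρ (by omega) hEJ).elim
  obtain ⟨hLB0, hg0, hx1e, hcc0⟩ := hstep0
  have hd0 : ρ.d 0 = 0 := hnotime 0 (by omega) (by simp [hst0])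
  have hx0lt : x₀ < 1 := by rw [hx0, hd0] at hg0; linarith
  have hx1v : (ρ.st 1).2 = x₀ := by rw [hx1e, hx0, hd0]; ring
  obtain ⟨hLC0, hg1, hx2v, hcc1⟩ := succB0 ρ (by omega) hLB0
  have hd2 : ρ.d 2 = 0 := hnotime 2 (by omega) (by simp [hLC0])
  obtain ⟨hLC3, hx3e, hcc2⟩ := succC0 ρ (by omega) hLC0
  have hx3v : (ρ.st 3).2 = 0 := by rw [hx3e, hx2v, hd2]; ring
  have hd1v : ρ.d 1 = 1 - x₀ := by rw [hx1v] at hg1; linarith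
  have c0 : ρ.stepCost 0 = 0 := by rw [costE ρ hst0, hd0, hcc0]; norm_num
  have c1 : ρ.stepCost 1 = 3 * (1 - x₀) := by
    rw [costE ρ hLB0, hcc1, hd1v]; norm_num [Mod12]; ring
  have c2 : ρ.stepCost 2 = 0 := by rw [costE ρ hLC0, hd2, hcc2]; norm_num
  -- C and C' only occur before T
  have hnotail : ∀ r, r ≤ T + 9 → (ρ.st r).1 = L12.C ∨ (ρ.st r).1 = L12.C' → r < T := by
    intro r hr hc
    by_contra hge
    push_neg at hge
    have : r = T ∨ r = T+1 ∨ r = T+2 ∨ r = T+3 ∨ r = T+4 ∨ r = T+5 ∨ r = T+6 ∨ r = T+7 ∨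
        r = T+8 ∨ r = T+9 := by omega
    rcases this with rfl|rfl|rfl|rfl|rfl|rfl|rfl|rfl|rfl|rfl <;> rcases hc with h|h <;>
      simp [hLT, hLT1, hLT2, hLT3, hLT4, hLT5, hLT6, hLT7, hLT8, hLT9] at h
  -- E1 never occurs
  have hnoE1 : ∀ r, r ≤ T+9 → (ρ.st r).1 = L12.E1 → False := by
    intro r hr hE
    have h1 : r ≠ T+9 := by intro h; rw [h, hLT9] at hE; exact absurd hE (by decide)
    obtain ⟨hF, -, -⟩ := succE1 ρ (by omega) hE
    have h2 : r+1 ≠ T+9 := by intro h; rw [h, hLT9] at hF; exact absurd hF (by decide)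
    obtain ⟨hG, -, -⟩ := succF1 ρ (by omega) hF
    have h3 : r+2 ≠ T+9 := by intro h; rw [h, hLT9] at hG; exact absurd hG (by decide)
    obtain ⟨hH, -, -⟩ := succG1 ρ (by omega) hG
    have h4 : r+3 ≠ T+9 := by intro h; rw [h, hLT9] at hH; exact absurd hH (by decide)
    obtain ⟨hX, -, -⟩ := succH1 ρ (by omega) hH
    have h5 : r+4 ≠ T+9 := by intro h; rw [h, hLT9] at hX; exact absurd hX (by decide)
    exact succExitJ ρ (by omega) hX
  -- E2 only occurs at T+1
  have hE2T : ∀ r, r ≤ T+9 → (ρ.st r).1 = L12.E2 → r = T+1 := by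
    intro r hr hE
    have h1 : r ≠ T+9 := by intro h; rw [h, hLT9] at hE; exact absurd hE (by decide)
    obtain ⟨hF, -, -⟩ := succE2 ρ (by omega) hE
    have h2 : r+1 ≠ T+9 := by intro h; rw [h, hLT9] at hF; exact absurd hF (by decide)
    obtain ⟨hG, -, -⟩ := succF2 ρ (by omega) hF
    have h3 : r+2 ≠ T+9 := by intro h; rw [h, hLT9] at hG; exact absurd hG (by decide)
    obtain ⟨hH, -, -⟩ := succG2 ρ (by omega) hG
    have h4 : r+3 ≠ T+9 := by intro h; rw [h, hLT9] at hH; exact absurd hH (by decide)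
    obtain ⟨hA2', -, -⟩ := succH2 ρ (by omega) hH
    have h5 : r+4 ≠ T+9 := by intro h; rw [h, hLT9] at hA2'; exact absurd hA2' (by decide)
    obtain ⟨hB2', -, -⟩ := succA2 ρ (by omega) hA2'
    have h6 : r+5 ≠ T+9 := by intro h; rw [h, hLT9] at hB2'; exact absurd hB2' (by decide)
    obtain ⟨hC2', -, -, -⟩ := succB2 ρ (by omega) hB2'
    have h7 : r+6 ≠ T+9 := by intro h; rw [h, hLT9] at hC2'; exact absurd hC2' (by decide)
    obtain ⟨hD2', -, -⟩ := succC2 ρ (by omega) hC2'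
    have h8 : r+7 ≠ T+9 := by intro h; rw [h, hLT9] at hD2'; exact absurd hD2' (by decide)
    obtain ⟨hEK, -, -⟩ := succD2 ρ (by omega) hD2'
    have h9 : r+8 = T+9 := by
      by_contra h
      exact succExitK ρ (by omega) hEK
    omega
  -- telescoping along a C/C' stretch
  have stretch : ∀ n r j₀, j₀ - r = n → r ≤ j₀ → j₀ ≤ T+9 →
      ((ρ.st r).1 = L12.C ∨ (ρ.st r).1 = L12.C') →
      (∀ s, r ≤ s → s < j₀ → (ρ.st s).1 ≠ L12.D) →
      ∑ t ∈ Finset.Ico r j₀, ρ.stepCost t = (ρ.st j₀).2 - (ρ.st r).2 := by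
    intro n
    induction n using Nat.strong_induction_on with
    | _ n IH =>
    intro r j₀ hn hrj hjk hloc hnoDs
    rcases Nat.eq_or_lt_of_le hrj with rfl | hlt
    · simp
    · have cR : ρ.cc r = 0 → ρ.stepCost r = ρ.d r := by
        intro hcc
        rcases hloc with h|h
        · rw [costE ρ h, hcc]; norm_num [Mod12]
        · rw [costE ρ h, hcc]; norm_num [Mod12]
      rcases hloc with hC | hC'
      · rcases succC ρ (by omega) hC with ⟨hDn, hx', hcc⟩ | ⟨hC'1, hx', hcc⟩
        · have hr1 : r + 1 = j₀ := by
            by_contra hne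
            exact hnoDs (r+1) (by omega) (by omega) hDn
          rw [← hr1, sum_one' ρ r (r+1) rfl, cR hcc, hx']; ring
        · have hrec := IH (j₀ - (r+1)) (by omega) (r+1) j₀ rfl (by omega) hjk
            (Or.inr hC'1) (fun s h1 h2 => hnoDs s (by omega) h2)
          rw [sum_split ρ (show r ≤ r+1 by omega) (show r+1 ≤ j₀ by omega),
              sum_one' ρ r (r+1) rfl, cR hcc, hrec, hx']; ring
      · obtain ⟨hCn, hx', hcc⟩ := succCp ρ (by omega) hC'
        have hdr : ρ.d r = 0 := hnotime r (by omega) (by simp [hC'])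
        have hrec := IH (j₀ - (r+1)) (by omega) (r+1) j₀ rfl (by omega) hjk
          (Or.inl hCn) (fun s h1 h2 => hnoDs s (by omega) h2)
        rw [sum_split ρ (show r ≤ r+1 by omega) (show r+1 ≤ j₀ by omega),
            sum_one' ρ r (r+1) rfl, cR hcc, hrec, hx', hdr]; ring
  -- the main induction along the run
  have MAIN : ∀ n i m α q, T - i = n → MInv ρ x₀ T i m α q →
      ρ.d (T+1) = 1 - x₀ ∧ ∃ q' : ℕ, (3:ℝ)^q' * x₀ < 1 ∧ 1 < (3:ℝ)^(q'+1) * x₀ := by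
    intro n
    induction n using Nat.strong_induction_on with
    | _ n IH =>
    intro i m α q hn inv
    obtain ⟨hmi, hai, hiT, hlocI, hlocM, hlocA, hxI, hxM, hw0, hw1, hwq, hnomk, hnoD,
      hSα, hmk⟩ := inv
    have hiTlt : i < T := by
      rcases Nat.eq_or_lt_of_le hiT with h | h
      · rw [h, hLT] at hlocI; exact absurd hlocI (by decide)
      · exact h
    have hd0i : 0 ≤ ρ.d i := (ρ.hdel i (by omega)).1
    have hcci : ρ.cc i = 0 := by
      rcases succC ρ (by omega) hlocI with ⟨-, -, h⟩ | ⟨-, -, h⟩ <;> exact h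
    have cI : ρ.stepCost i = ρ.d i := by
      rw [costE ρ hlocI, hcci]; norm_num [Mod12]
    rcases succC ρ (by omega) hlocI with ⟨hD, hx', hcc⟩ | ⟨hC', hx', hcc⟩
    · -- next step goes to D
      have hSαj : ∑ r ∈ Finset.Ico α (i+1), ρ.stepCost r
          = 3 * (1 - (ρ.st α).2) + (ρ.st (i+1)).2 := by
        rw [sum_split ρ (show α ≤ i by omega) (show i ≤ i+1 by omega),
            sum_one' ρ i (i+1) rfl, cI, hSα, hx']; ring
      have h3w : (ρ.st (i+1)).2 = 3 * (ρ.st α).2 := by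
        have hc1 := hcost₁ α (i+1) (by omega) (by omega) hlocA hD
          (fun r h1 h2 => hnoD r h1 (by omega))
        rw [hSαj] at hc1; linarith
      by_cases hjT : i + 1 = T
      · -- this is the final D-visit
        subst hjT
        have cE2' : ρ.stepCost (i+2) = 3 * ρ.d (i+2) := cT1
        have hLE2' : (ρ.st (i+2)).1 = L12.E2 := hLT1
        have hLF2' : (ρ.st (i+3)).1 = L12.F2 := hLT2
        have htE0' : 0 ≤ ρ.d (i+2) := htE0
        have hnomkF : ∀ r, m < r → r < i+3 →
            ¬((ρ.st r).1 = L12.C' ∨ (ρ.st r).1 = L12.F2) := by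
          intro r h1 h2 hor
          have : r ≤ i ∨ r = i+1 ∨ r = i+2 := by omega
          rcases this with h | rfl | rfl
          · exact hnomk r h1 h hor
          · rcases hor with h|h <;> (rw [hD] at h; exact absurd h (by decide))
          · rcases hor with h|h <;> (rw [hLE2'] at h; exact absurd h (by decide))
        have hc2 := hcost₂ m (i+3) (by omega) (by omega) hlocM (Or.inr hLF2') hnomkF
        have hexp : ∑ r ∈ Finset.Ico m (i+3), ρ.stepCost r
            = (∑ r ∈ Finset.Ico m i, ρ.stepCost r) + ρ.stepCost i + ρ.stepCost (i+1)
              + ρ.stepCost (i+2) := by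
          rw [sum_split ρ (show m ≤ i+2 by omega) (show i+2 ≤ i+3 by omega),
              sum_one' ρ (i+2) (i+3) rfl,
              sum_split ρ (show m ≤ i+1 by omega) (show i+1 ≤ i+2 by omega),
              sum_one' ρ (i+1) (i+2) rfl,
              sum_split ρ (show m ≤ i by omega) (show i ≤ i+1 by omega),
              sum_one' ρ i (i+1) rfl]
        rw [hexp, cI, cT, cE2'] at hc2
        rcases hmk with ⟨hSm, hum, huf⟩ | ⟨hSm, hum, huf⟩
        · -- marker in the final phase: conclude
          have htE : ρ.d (i+2) = 1 - x₀ := by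
            rw [hSm] at hc2
            have h1 := hx'
            have h2 := h3w
            have h3 := huf
            linarith
          refine ⟨htE, q, ?_, ?_⟩
          · rw [← hwq]; exact hw1
          · have hpow : (3:ℝ)^(q+1) * x₀ = 3 * ((3:ℝ)^q * x₀) := by ring
            rw [hpow, ← hwq]
            have := hyT
            linarith [h3w]
        · -- marker in the previous phase: impossible
          rw [hSm] at hc2
          have hdd : 0 ≤ ρ.d (i+2) := htE0'
          have hx00 : x₀ = 0 := by
            have h1 := hx'
            have h2 := h3w
            have h3 := huf
            linarith
          have hw00 : (ρ.st α).2 = 0 := by rw [hwq, hx00, mul_zero]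
          exact absurd hyT (by rw [h3w, hw00]; norm_num)
      · -- a non-final D-visit
        have hi1T : i+1 < T := by omega
        rcases succD ρ (by omega) hD with ⟨hA, hg, hx2, hcc2⟩ | ⟨hE1, -, -, -⟩ | ⟨hE2, -, -, -⟩
        · -- goes to A : phase crossing
          have hdj : ρ.d (i+1) = 0 := hnotime (i+1) (by omega) (by simp [hD])
          have hylt : (ρ.st (i+1)).2 < 1 := by rw [hdj] at hg; linarith
          have hx2v : (ρ.st (i+2)).2 = (ρ.st (i+1)).2 := by rw [hx2, hdj]; ring
          have hdA : ρ.d (i+2) = 0 := hnotime (i+2) (by omega) (by simp [hA])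
          obtain ⟨hB, hx3, hcc3⟩ := succA ρ (by omega) hA
          have hx3v : (ρ.st (i+3)).2 = (ρ.st (i+1)).2 := by rw [hx3, hdA, hx2v]; ring
          obtain ⟨hC4, hgB, hx4, hcc4⟩ := succB ρ (by omega) hB
          have hdB : ρ.d (i+3) = 1 - (ρ.st (i+1)).2 := by rw [hx3v] at hgB; linarith
          have cD : ρ.stepCost (i+1) = 0 := by rw [costE ρ hD, hdj, hcc2]; norm_num
          have cA : ρ.stepCost (i+2) = 0 := by rw [costE ρ hA, hdA, hcc3]; norm_num
          have cB : ρ.stepCost (i+3) = 3 * (1 - (ρ.st (i+1)).2) := by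
            rw [costE ρ hB, hcc4, hdB]; norm_num [Mod12]; ring
          rcases hmk with ⟨hSm, hum, huf⟩ | ⟨hSm, hum, huf⟩
          · -- marker in current phase: cross to the next phase
            have hi4T : i+4 ≤ T := by
              have := hnotail (i+4) (by omega) (Or.inl hC4); omega
            refine IH (T - (i+4)) (by omega) (i+4) m (i+2) (q+1) rfl ?_
            refine ⟨by omega, by omega, hi4T, hC4, hlocM, Or.inl hA, ?_, hxM, ?_, ?_, ?_,
              ?_, ?_, ?_, ?_⟩
            · simp [hx4]
            · rw [hx2v, hx']; linarith
            · rw [hx2v]; exact hylt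
            · rw [hx2v, h3w, hwq]; ring
            · intro r h1 h2 hor
              have : r ≤ i ∨ r = i+1 ∨ r = i+2 ∨ r = i+3 ∨ r = i+4 := by omega
              rcases this with h | rfl | rfl | rfl | rfl
              · exact hnomk r h1 h hor
              · rcases hor with h|h <;> (rw [hD] at h; exact absurd h (by decide))
              · rcases hor with h|h <;> (rw [hA] at h; exact absurd h (by decide))
              · rcases hor with h|h <;> (rw [hB] at h; exact absurd h (by decide))
              · rcases hor with h|h <;> (rw [hC4] at h; exact absurd h (by decide))
            · intro r h1 h2
              have : r = i+3 ∨ r = i+4 := by omega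
              rcases this with rfl | rfl
              · rw [hB]; decide
              · rw [hC4]; decide
            · rw [sum_split ρ (show i+2 ≤ i+3 by omega) (show i+3 ≤ i+4 by omega),
                  sum_one' ρ (i+2) (i+3) rfl, sum_one' ρ (i+3) (i+4) rfl, cA, cB, hx4, hx2v]
              ring
            · refine Or.inr ⟨?_, ?_, ?_⟩
              · rw [sum_split ρ (show m ≤ i+3 by omega) (show i+3 ≤ i+4 by omega),
                    sum_one' ρ (i+3) (i+4) rfl,
                    sum_split ρ (show m ≤ i+2 by omega) (show i+2 ≤ i+3 by omega),
                    sum_one' ρ (i+2) (i+3) rfl,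
                    sum_split ρ (show m ≤ i+1 by omega) (show i+1 ≤ i+2 by omega),
                    sum_one' ρ (i+1) (i+2) rfl,
                    sum_split ρ (show m ≤ i by omega) (show i ≤ i+1 by omega),
                    sum_one' ρ i (i+1) rfl, hSm, cI, cD, cA, cB, hx4, hx2v, hx']
                ring
              · rw [hx2v, hx']; linarith
              · rw [hx2v, h3w]; exact huf
          · -- marker in the previous phase: impossible
            obtain ⟨jm, hjm1, hjm2, hjm3⟩ := hfollow m (by omega) hlocM
            have hPex : ∃ jj, m < jj ∧ jj ≤ T+9 ∧
                ((ρ.st jj).1 = L12.C' ∨ (ρ.st jj).1 = L12.F2) := ⟨jm, hjm1, by omega, hjm3⟩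
            obtain ⟨J, ⟨hj21, hj22, hj23⟩, hminJ⟩ :
                ∃ J, (m < J ∧ J ≤ T+9 ∧ ((ρ.st J).1 = L12.C' ∨ (ρ.st J).1 = L12.F2)) ∧
                  ∀ s, s < J → ¬(m < s ∧ s ≤ T+9 ∧
                    ((ρ.st s).1 = L12.C' ∨ (ρ.st s).1 = L12.F2)) :=
              ⟨Nat.find hPex, Nat.find_spec hPex, fun s hs => Nat.find_min hPex hs⟩
            have hc2 := hcost₂ m J hj21 (by omega) hlocM hj23
              (fun r h1 h2 hor => hminJ r h2 ⟨h1, by omega, hor⟩)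
            have hj2big : i+4 ≤ J := by
              by_contra hlt'
              push_neg at hlt'
              have : J ≤ i ∨ J = i+1 ∨ J = i+2 ∨
                  J = i+3 := by omega
              rcases this with h | h | h | h
              · exact hnomk _ hj21 h hj23
              · rw [h] at hj23
                rcases hj23 with hh|hh <;> (rw [hD] at hh; exact absurd hh (by decide))
              · rw [h] at hj23
                rcases hj23 with hh|hh <;> (rw [hA] at hh; exact absurd hh (by decide))
              · rw [h] at hj23
                rcases hj23 with hh|hh <;> (rw [hB] at hh; exact absurd hh (by decide))
            have hmono : (∑ r ∈ Finset.Ico m (i+4), ρ.stepCost r)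
                ≤ ∑ r ∈ Finset.Ico m (J), ρ.stepCost r := by
              rw [sum_split ρ (show m ≤ i+4 by omega) hj2big]
              have := sum_nn ρ (a := i+4) (b := J) (by omega)
              linarith
            have hS4 : ∑ r ∈ Finset.Ico m (i+4), ρ.stepCost r
                = 6 - 8*(ρ.st α).2 - (ρ.st m).2 := by
              rw [sum_split ρ (show m ≤ i+3 by omega) (show i+3 ≤ i+4 by omega),
                  sum_one' ρ (i+3) (i+4) rfl,
                  sum_split ρ (show m ≤ i+2 by omega) (show i+2 ≤ i+3 by omega),
                  sum_one' ρ (i+2) (i+3) rfl,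
                  sum_split ρ (show m ≤ i+1 by omega) (show i+1 ≤ i+2 by omega),
                  sum_one' ρ (i+1) (i+2) rfl,
                  sum_split ρ (show m ≤ i by omega) (show i ≤ i+1 by omega),
                  sum_one' ρ i (i+1) rfl, hSm, cI, cD, cA, cB]
              have h1 := hx'
              have h2 := h3w
              linarith
            have h9w : 3*(ρ.st α).2 < 1 := by rw [← h3w]; exact hylt
            have hgt : (3:ℝ) < ∑ r ∈ Finset.Ico m (J), ρ.stepCost r := by
              linarith
            rw [hc2] at hgt
            exact absurd hgt (by norm_num)
        · exact (hnoE1 (i+2) (by omega) hE1).elim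
        · exact absurd (hE2T (i+2) (by omega) hE2) (by omega)
    · -- next step goes to C' : a new marker
      have hi1T : i+1 < T := hnotail (i+1) (by omega) (Or.inr hC')
      have hc2 := hcost₂ m (i+1) (by omega) (by omega) hlocM (Or.inl hC')
        (fun r h1 h2 => hnomk r h1 (by omega))
      have hSm1 : ∑ r ∈ Finset.Ico m (i+1), ρ.stepCost r
          = (∑ r ∈ Finset.Ico m i, ρ.stepCost r) + ρ.d i := by
        rw [sum_split ρ (show m ≤ i by omega) (show i ≤ i+1 by omega),
            sum_one' ρ i (i+1) rfl, cI]
      rcases hmk with ⟨hSm, hum, huf⟩ | ⟨hSm, hum, huf⟩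
      · -- a second marker in the same phase: impossible
        have hvu : (ρ.st (i+1)).2 = (ρ.st m).2 + 3 := by
          rw [hSm1, hSm] at hc2; rw [hx']; linarith
        have hDex : ∃ jj, i < jj ∧ (ρ.st jj).1 = L12.D := ⟨T, hiTlt, hLT⟩
        obtain ⟨J3, ⟨hj31, hj3D⟩, hminJ3⟩ :
            ∃ J3, (i < J3 ∧ (ρ.st J3).1 = L12.D) ∧
              ∀ s, s < J3 → ¬(i < s ∧ (ρ.st s).1 = L12.D) :=
          ⟨Nat.find hDex, Nat.find_spec hDex, fun s hs => Nat.find_min hDex hs⟩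
        have hj3T : J3 ≤ T := by
          by_contra h
          exact hminJ3 T (by omega) ⟨hiTlt, hLT⟩
        have hnoD3 : ∀ s, i < s → s < J3 → (ρ.st s).1 ≠ L12.D :=
          fun s h1 h2 hDs => hminJ3 s h2 ⟨h1, hDs⟩
        have hstr := stretch (J3 - (i+1)) (i+1) (J3) rfl (by omega)
          (by omega) (Or.inr hC') (fun s h1 h2 => hnoD3 s (by omega) h2)
        have hmono : 0 ≤ ∑ r ∈ Finset.Ico (i+1) (J3), ρ.stepCost r :=
          sum_nn ρ (by omega)
        have hnoDall : ∀ r, α < r → r < J3 → (ρ.st r).1 ≠ L12.D := by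
          intro r h1 h2
          by_cases hle : r ≤ i
          · exact hnoD r h1 hle
          · exact hnoD3 r (by omega) h2
        have hc1 := hcost₁ α (J3) (by omega) (by omega) hlocA hj3D hnoDall
        have hSαj3 : ∑ r ∈ Finset.Ico α (J3), ρ.stepCost r
            = 3*(1 - (ρ.st α).2) + (ρ.st (J3)).2 := by
          rw [sum_split ρ (show α ≤ i+1 by omega) (show i+1 ≤ J3 by omega), hstr,
              sum_split ρ (show α ≤ i by omega) (show i ≤ i+1 by omega),
              sum_one' ρ i (i+1) rfl, cI, hSα, hx']
          ring
        rw [hSαj3] at hc1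
        have : False := by
          rw [hstr] at hmono
          linarith
        exact this.elim
      · -- a legitimate new marker
        have hvu : (ρ.st (i+1)).2 = 2*(ρ.st α).2 + (ρ.st m).2 := by
          rw [hSm1, hSm] at hc2; rw [hx']; linarith
        obtain ⟨hC2, hx2, hcc2⟩ := succCp ρ (by omega) hC'
        have hd1 : ρ.d (i+1) = 0 := hnotime (i+1) (by omega) (by simp [hC'])
        have hx2v : (ρ.st (i+2)).2 = (ρ.st (i+1)).2 := by rw [hx2, hd1]; ring
        have cC' : ρ.stepCost (i+1) = 0 := by rw [costE ρ hC', hd1, hcc2]; norm_num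
        have hi2T : i+2 ≤ T := by
          have := hnotail (i+2) (by omega) (Or.inl hC2); omega
        refine IH (T - (i+2)) (by omega) (i+2) (i+1) α q rfl ?_
        refine ⟨by omega, by omega, hi2T, hC2, Or.inr hC', hlocA, ?_, ?_, hw0, hw1, hwq,
          ?_, ?_, ?_, ?_⟩
        · rw [hx2v, hx']; linarith
        · rw [hx']; linarith
        · intro r h1 h2 hor
          have heq : r = i+2 := by omega
          subst heq
          rcases hor with h|h <;> (rw [hC2] at h; exact absurd h (by decide))
        · intro r h1 h2
          have : r ≤ i ∨ r = i+1 ∨ r = i+2 := by omega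
          rcases this with h | rfl | rfl
          · exact hnoD r h1 h
          · rw [hC']; decide
          · rw [hC2]; decide
        · rw [sum_split ρ (show α ≤ i+1 by omega) (show i+1 ≤ i+2 by omega),
              sum_one' ρ (i+1) (i+2) rfl, cC',
              sum_split ρ (show α ≤ i by omega) (show i ≤ i+1 by omega),
              sum_one' ρ i (i+1) rfl, cI, hSα, hx2v, hx']
          ring
        · refine Or.inl ⟨?_, ?_, ?_⟩
          · rw [sum_one' ρ (i+1) (i+2) rfl, cC', hx2v]; ring
          · rw [hx2v]
          · rw [hvu, huf]; ring
  -- initial invariant at position 3 and conclusion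
  have h3T : 3 ≤ T := by
    have := hnotail 3 (by omega) (Or.inl hLC3); omega
  have init : MInv ρ x₀ T 3 2 0 0 := by
    refine ⟨by omega, by omega, h3T, hLC3, Or.inl hLC0, Or.inr hst0, ?_, ?_, ?_, ?_, ?_,
      ?_, ?_, ?_, ?_⟩
    · simp [hx3v]
    · simp [hx2v]
    · rw [hx0]; exact hx₀
    · rw [hx0]; exact hx0lt
    · rw [hx0]; norm_num
    · intro r h1 h2 hor
      have heq : r = 3 := by omega
      subst heq
      rcases hor with h|h <;> (rw [hLC3] at h; exact absurd h (by decide))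
    · intro r h1 h2
      have : r = 1 ∨ r = 2 ∨ r = 3 := by omega
      rcases this with rfl|rfl|rfl
      · rw [hLB0]; decide
      · rw [hLC0]; decide
      · rw [hLC3]; decide
    · have he : Finset.Ico 0 3 = Finset.range 3 := by rw [Finset.range_eq_Ico]
      rw [he, Finset.sum_range_succ, Finset.sum_range_succ, Finset.sum_range_one,
          c0, c1, c2, hx0, hx3v]
      ring
    · refine Or.inl ⟨?_, ?_, ?_⟩
      · rw [sum_one' ρ 2 3 rfl, c2, hx3v, hx2v]; ring
      · simp [hx2v, hx3v]
      · rw [hx2v, hx0]; ring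
  obtain ⟨htE, q', hq1, hq2⟩ := MAIN (T - 3) 3 2 0 0 rfl init
  constructor
  · linarith [hx₁v, hsum2, hsum1, htE]
  · intro n hcon
    have h3n : (0:ℝ) < 3^n := by positivity
    rw [hcon, mul_one_div, div_lt_one h3n] at hq1
    rw [hcon, mul_one_div, lt_div_iff₀ h3n, one_mul] at hq2
    have l1 : q' < n := by
      exact (pow_lt_pow_iff_right₀ (by norm_num : (1:ℝ) < 3)).mp hq1
    have l2 : n < q'+1 := by
      exact (pow_lt_pow_iff_right₀ (by norm_num : (1:ℝ) < 3)).mp hq2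
    omega
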